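/- arXiv:1910.00205 — 4 statements merged into one kernel-verified Lean document; each statement's English description precedes it below -/
import Mathlib

section
/- Let $b_l > 0$, $w_l > 0$ for $l=1,\dots,M$, with $\sum_{i=1}^M b_i \geq 1$, let $\beta^\star$ satisfy $\sum_{i=1}^M \min\{b_i, \beta^\star\sqrt{w_i}\} = 1$, let $\epsilon > 0$, and let $x^\star = -\tfrac12 + \sqrt{\tfrac14 + \tfrac1\epsilon}$. Then the vector $r_l^\star = \min\{b_l, \beta^\star\sqrt{w_l}\}\, x^\star$ satisfies, for every $l$, $\big([1 - e^{-r_l^\star\epsilon}]\sum_{i=1}^M r_i^\star + r_l^\star e^{-r_l^\star\epsilon}\big)/\big(\sum_{i=1}^M r_i^\star + 1\big) \leq b_l$. -/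
theorem proposed_solution_feasible (M : ℕ) (hM : 0 < M)
    (b w : Fin M → ℝ) (hb : ∀ l, 0 < b l) (hw : ∀ l, 0 < w l)
    (hsum : 1 ≤ ∑ i, b i)
    (βs : ℝ) (hβ : ∑ i, min (b i) (βs * Real.sqrt (w i)) = 1)
    (ε : ℝ) (hε : 0 < ε)
    (xs : ℝ) (hxs : xs = -(1/2 : ℝ) + Real.sqrt (1/4 + 1/ε))
    (rs : Fin M → ℝ) (hrs : ∀ l, rs l = min (b l) (βs * Real.sqrt (w l)) * xs) :
    ∀ l, ((1 - Real.exp (-(rs l * ε))) * ∑ i, rs i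
          + rs l * Real.exp (-(rs l * ε))) / (∑ i, rs i + 1) ≤ b l := by
  have hβpos : 0 < βs := by
    by_contra h
    push_neg at h
    have hle : ∑ i, min (b i) (βs * Real.sqrt (w i)) ≤ 0 := by
      apply Finset.sum_nonpos
      intro i _
      exact le_trans (min_le_right _ _)
        (mul_nonpos_of_nonpos_of_nonneg h (Real.sqrt_nonneg _))
    linarith
  have h14 : (0:ℝ) ≤ 1/4 + 1/ε := by positivity
  have hs0 : 0 ≤ Real.sqrt (1/4 + 1/ε) := Real.sqrt_nonneg _
  have hs2 : (Real.sqrt (1/4 + 1/ε))^2 = 1/4 + 1/ε := Real.sq_sqrt h14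
  have hεinv : 0 < 1/ε := by positivity
  have hx0 : 0 ≤ xs := by
    rw [hxs]
    nlinarith
  have hxeq : xs^2 * ε + xs * ε = 1 := by
    have h1 : xs^2 + xs = 1/ε := by rw [hxs]; nlinarith
    have h2 : (xs^2 + xs) * ε = (1/ε) * ε := by rw [h1]
    field_simp at h2
    linarith
  have hsumr : ∑ i, rs i = xs := by
    simp_rw [hrs]
    rw [← Finset.sum_mul, hβ, one_mul]
  intro l
  set m := min (b l) (βs * Real.sqrt (w l)) with hmdef
  have hm0 : 0 < m :=
    lt_min (hb l) (mul_pos hβpos (Real.sqrt_pos.2 (hw l)))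
  have hmb : m ≤ b l := min_le_left _ _
  set E := Real.exp (-(rs l * ε)) with hEdef
  have hrl : rs l = m * xs := hrs l
  have hE0 : 0 < E := Real.exp_pos _
  have hE1 : E ≤ 1 := by
    rw [hEdef, Real.exp_le_one_iff]
    have : 0 ≤ rs l * ε := mul_nonneg (by rw [hrl]; positivity) hε.le
    linarith
  have hE2 : 1 - m * xs * ε ≤ E := by
    have h := Real.add_one_le_exp (-(rs l * ε))
    rw [hEdef, hrl]
    rw [hrl] at h
    linarith
  have key : xs * (1 - E) * (1 - m) ≤ m := by
    rcases le_or_gt m 1 with hm1 | hm1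
    · have h1 : 1 - E ≤ m * xs * ε := by linarith
      have h2 : xs * (1 - E) * (1 - m) ≤ xs * (m * xs * ε) * (1 - m) :=
        mul_le_mul_of_nonneg_right
          (mul_le_mul_of_nonneg_left h1 hx0) (by linarith)
      have h3 : xs * (m * xs * ε) * (1 - m) ≤ m * (xs^2 * ε) := by
        nlinarith [mul_nonneg (mul_nonneg hm0.le (mul_nonneg hx0 hx0)) hε.le]
      have h4 : m * (xs^2 * ε) ≤ m := by
        nlinarith [mul_nonneg hx0 hε.le]
      linarith
    · have : xs * (1 - E) * (1 - m) ≤ 0 :=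
        mul_nonpos_of_nonneg_of_nonpos
          (mul_nonneg hx0 (by linarith)) (by linarith)
      linarith
  rw [hsumr, hrl, div_le_iff₀ (by linarith)]
  have hbm : m * (xs + 1) ≤ b l * (xs + 1) :=
    mul_le_mul_of_nonneg_right hmb (by linarith)
  nlinarith
end

section
/- Let $b_l > 0$, $w_l > 0$, $\epsilon > 0$ and consider minimizing $f(\mathbf{r}) = \sum_{l=1}^M \frac{w_l e^{-r_l\epsilon}}{r_l} e^{(\sum_i r_i)\epsilon}(1 + \sum_i r_i) + \sum_l w_l$ over $r_l > 0$ subject to $r_l \leq b_l(\sum_i r_i + 1)$ for all $l$. If $\sum_{i=1}^M b_i \geq 1$ and $\beta^\star$ satisfies $\sum_i \min\{b_i, \beta^\star\sqrt{w_i}\} = 1$, then the infimum of $f$ is at least $\sum_{i=1}^M \left[\frac{w_i}{\min\{b_i, \beta^\star\sqrt{w_i}\}} + w_i\right]$. -/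
theorem objective_lower_bound (M : ℕ) (hM : 0 < M)
    (b w : Fin M → ℝ) (hb : ∀ l, 0 < b l) (hw : ∀ l, 0 < w l)
    (ε : ℝ) (hε : 0 < ε)
    (hsum : 1 ≤ ∑ i, b i)
    (βs : ℝ) (hβ : ∑ i, min (b i) (βs * Real.sqrt (w i)) = 1) :
    ∀ r : Fin M → ℝ, (∀ l, 0 < r l) →
      (∀ l, r l ≤ b l * (∑ i, r i + 1)) →
      ∑ i, (w i / min (b i) (βs * Real.sqrt (w i)) + w i)
        ≤ ∑ l, (w l * Real.exp (-(r l * ε)) / r l)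
            * Real.exp ((∑ i, r i) * ε) * (1 + ∑ i, r i) + ∑ l, w l := by
  intro r hr hcon
  have hne : Nonempty (Fin M) := Fin.pos_iff_nonempty.mp hM
  set S := ∑ i, r i with hSdef
  have hS0 : 0 < S := Finset.sum_pos (fun i _ => hr i) Finset.univ_nonempty
  have h1S : (0:ℝ) < 1 + S := by linarith
  -- βs > 0
  have hβs : 0 < βs := by
    by_contra h
    push_neg at h
    have : ∑ i, min (b i) (βs * Real.sqrt (w i)) ≤ ∑ i : Fin M, (0:ℝ) := by
      apply Finset.sum_le_sum
      intro i _
      exact le_trans (min_le_right _ _)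
        (mul_nonpos_of_nonpos_of_nonneg h (Real.sqrt_nonneg _))
    simp at this
    linarith [hβ]
  set m : Fin M → ℝ := fun i => min (b i) (βs * Real.sqrt (w i)) with hmdef
  set x : Fin M → ℝ := fun i => r i / (1 + S) with hxdef
  have hm : ∀ i, 0 < m i := fun i =>
    lt_min (hb i) (mul_pos hβs (Real.sqrt_pos.mpr (hw i)))
  have hx : ∀ i, 0 < x i := fun i => div_pos (hr i) h1S
  have hmsq : ∀ i, (m i)^2 ≤ βs^2 * w i := by
    intro i
    have h1 : m i ≤ βs * Real.sqrt (w i) := min_le_right _ _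
    have h2 : (m i)^2 ≤ (βs * Real.sqrt (w i))^2 := by
      apply pow_le_pow_left₀ (hm i).le h1
    calc (m i)^2 ≤ (βs * Real.sqrt (w i))^2 := h2
      _ = βs^2 * w i := by
          rw [mul_pow, Real.sq_sqrt (hw i).le]
  have hxb : ∀ i, x i ≤ b i := by
    intro i
    rw [hxdef]
    rw [div_le_iff₀ h1S]
    have h1 := hcon i
    nlinarith [h1]
  have hsumx : ∑ i, x i ≤ 1 := by
    rw [hxdef, ← Finset.sum_div, ← hSdef, div_le_one h1S]
    linarith
  have hsumm : ∑ i, m i = 1 := hβ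
  -- AM-GM per index
  have key1 : ∀ i, 2 * (w i / m i) ≤ w i / x i + (w i / (m i)^2) * x i := by
    intro i
    have hmi := hm i
    have hxi := hx i
    have hwi := hw i
    rw [mul_div_assoc']
    have hrhs : w i / x i + (w i / (m i)^2) * x i
        = (w i * (m i)^2 + w i * (x i)^2) / (x i * (m i)^2) := by
      field_simp
    rw [hrhs, div_le_div_iff₀ hmi (mul_pos hxi (pow_pos hmi 2))]
    nlinarith [mul_nonneg (mul_nonneg hwi.le hmi.le) (sq_nonneg (x i - m i))]
  have key2 : ∀ i, (w i / (m i)^2) * x i ≤ w i / m i + (1/βs^2) * (x i - m i) := by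
    intro i
    have hmi := hm i
    have hxi := hx i
    have hwi := hw i
    have hcase : (x i - m i) * (βs^2 * w i - (m i)^2) ≤ 0 := by
      rcases le_or_gt (x i) (m i) with h | h
      · exact mul_nonpos_of_nonpos_of_nonneg (by linarith) (by linarith [hmsq i])
      · have hmeq : m i = βs * Real.sqrt (w i) := by
          rcases min_cases (b i) (βs * Real.sqrt (w i)) with ⟨h1, h2⟩ | ⟨h1, h2⟩
          · exfalso
            have hmb : m i = b i := h1
            rw [hmb] at h
            linarith [hxb i]
          · rw [hmdef]; exact h1
        have : (m i)^2 = βs^2 * w i := by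
          rw [hmeq, mul_pow, Real.sq_sqrt (hw i).le]
        rw [this]; simp
    have hlhs : (w i / (m i)^2) * x i = (w i * x i) / (m i)^2 := by ring
    have hrhs : w i / m i + (1/βs^2) * (x i - m i)
        = (w i * βs^2 + m i * (x i - m i)) / (m i * βs^2) := by
      field_simp
    rw [hlhs, hrhs, div_le_div_iff₀ (pow_pos hmi 2) (mul_pos hmi (pow_pos hβs 2))]
    nlinarith [mul_nonneg hmi.le (neg_nonneg.2 hcase)]
  -- step 1 : ∑ w/m ≤ ∑ w/x
  have step1 : ∑ i, w i / m i ≤ ∑ i, w i / x i := by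
    have h1 : ∑ i, 2 * (w i / m i) ≤ ∑ i, (w i / x i + (w i / (m i)^2) * x i) :=
      Finset.sum_le_sum fun i _ => key1 i
    have h2 : ∑ i, (w i / (m i)^2) * x i
        ≤ ∑ i, (w i / m i + (1/βs^2) * (x i - m i)) :=
      Finset.sum_le_sum fun i _ => key2 i
    have h3 : ∑ i, (w i / m i + (1/βs^2) * (x i - m i))
        = ∑ i, w i / m i + (1/βs^2) * (∑ i, x i - 1) := by
      rw [Finset.sum_add_distrib, ← Finset.mul_sum, Finset.sum_sub_distrib, hsumm]
    have h4 : (1/βs^2) * (∑ i, x i - 1) ≤ 0 :=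
      mul_nonpos_of_nonneg_of_nonpos (by positivity) (by linarith)
    rw [Finset.sum_add_distrib, ← Finset.mul_sum] at h1
    rw [Finset.mul_sum] at h1
    rw [h3] at h2
    have h5 : ∑ i, 2 * (w i / m i) = 2 * ∑ i, w i / m i := by
      rw [Finset.mul_sum]
    rw [h5] at h1
    linarith
  -- step 2 : ∑ w/x ≤ first sum of f
  have step2 : ∑ i, w i / x i
      ≤ ∑ l, (w l * Real.exp (-(r l * ε)) / r l)
          * Real.exp (S * ε) * (1 + S) := by
    apply Finset.sum_le_sum
    intro l _
    have hrl := hr l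
    have hwl := hw l
    have hSl : r l ≤ S := Finset.single_le_sum (fun i _ => (hr i).le) (Finset.mem_univ l)
    have hxeq : w l / x l = w l / r l * (1 + S) := by
      rw [hxdef]
      field_simp
    have hexp : (1:ℝ) ≤ Real.exp (-(r l * ε)) * Real.exp (S * ε) := by
      rw [← Real.exp_add]
      apply Real.one_le_exp
      nlinarith
    have hrw : (w l * Real.exp (-(r l * ε)) / r l) * Real.exp (S * ε) * (1 + S)
        = (w l / r l * (1 + S)) * (Real.exp (-(r l * ε)) * Real.exp (S * ε)) := by
      ring
    rw [hxeq, hrw]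
    nlinarith [mul_pos (div_pos hwl hrl) h1S, Real.exp_pos (-(r l * ε)), Real.exp_pos (S * ε)]
  calc ∑ i, (w i / m i + w i) = ∑ i, w i / m i + ∑ i, w i := Finset.sum_add_distrib
    _ ≤ ∑ i, w i / x i + ∑ i, w i := by linarith
    _ ≤ _ := by linarith [step2]
end

section
/- Let $w_1,\dots,w_M > 0$ and $b_1,\dots,b_M > 0$ with $\sum_{i=1}^M b_i \geq 1$. Consider minimizing $\sum_{i=1}^M (w_i/a_i + w_i)$ over probability vectors $a_i > 0$ with $\sum_i a_i = 1$ and $a_l \leq b_l$ for all $l$. The optimal solution is $a_l = \min\{b_l, \beta^\star \sqrt{w_l}\}$ where $\beta^\star$ solves $\sum_i \min\{b_i, \beta^\star\sqrt{w_i}\} = 1$, and the optimal value is $\sum_{i=1}^M \left[\frac{w_i}{\min\{b_i, \beta^\star\sqrt{w_i}\}} + w_i\right]$. -/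
theorem synchronized_scheduler_optimal (M : ℕ) (hM : 0 < M)
    (w b : Fin M → ℝ) (hw : ∀ i, 0 < w i) (hb : ∀ i, 0 < b i)
    (hsum : 1 ≤ ∑ i, b i)
    (βs : ℝ) (hβ : ∑ i, min (b i) (βs * Real.sqrt (w i)) = 1) :
    (∀ l, 0 < min (b l) (βs * Real.sqrt (w l))) ∧
    (∀ l, min (b l) (βs * Real.sqrt (w l)) ≤ b l) ∧
    (∑ i, min (b i) (βs * Real.sqrt (w i)) = 1) ∧
    (∀ a : Fin M → ℝ, (∀ i, 0 < a i) → (∀ l, a l ≤ b l) →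
      (∑ i, a i = 1) →
      ∑ i, (w i / min (b i) (βs * Real.sqrt (w i)) + w i)
        ≤ ∑ i, (w i / a i + w i)) := by
  have hsq : ∀ i, 0 < Real.sqrt (w i) := fun i => Real.sqrt_pos.2 (hw i)
  have hβpos : 0 < βs := by
    by_contra h
    push_neg at h
    have : ∑ i, min (b i) (βs * Real.sqrt (w i)) ≤ 0 := by
      apply Finset.sum_nonpos
      intro i _
      exact min_le_of_right_le (mul_nonpos_of_nonpos_of_nonneg h (Real.sqrt_nonneg _))
    linarith [hβ]
  have hApos : ∀ l, 0 < min (b l) (βs * Real.sqrt (w l)) := fun l =>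
    lt_min (hb l) (mul_pos hβpos (hsq l))
  refine ⟨hApos, fun l => min_le_left _ _, hβ, ?_⟩
  intro a ha hab hasum
  set A : Fin M → ℝ := fun i => min (b i) (βs * Real.sqrt (w i)) with hA
  set c : ℝ := 1 / βs ^ 2 with hc
  have hcpos : 0 < c := by positivity
  have key : ∀ i : Fin M, w i / A i + w i + c * (A i - a i) ≤ w i / a i + w i := by
    intro i
    have hAi := hApos i
    have hai := ha i
    have step1 : w i / A i - (w i / (A i)^2) * (a i - A i) ≤ w i / a i := by
      have hid : w i / a i - (w i / A i - (w i / (A i)^2) * (a i - A i))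
          = w i * (a i - A i)^2 / (a i * (A i)^2) := by
        have hA0 : A i ≠ 0 := ne_of_gt hAi
        field_simp
        ring
      nlinarith [div_nonneg (mul_nonneg (hw i).le (sq_nonneg (a i - A i)))
        (le_of_lt (mul_pos hai (pow_pos hAi 2))), hid]
    have step2 : (w i / (A i)^2) * (a i - A i) ≤ c * (a i - A i) := by
      rcases min_cases (b i) (βs * Real.sqrt (w i)) with ⟨he, hle⟩ | ⟨he, hle⟩
      · -- A i = b i, b i ≤ βs √w
        have hAe : A i = b i := he
        have h1 : a i - A i ≤ 0 := by
          have := hab i; rw [hAe]; linarith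
        have h2 : c ≤ w i / (A i)^2 := by
          rw [hAe, hc]
          rw [div_le_div_iff₀ (pow_pos hβpos 2) (pow_pos (hb i) 2)]
          have hb2 : (b i)^2 ≤ βs^2 * w i := by
            have : (b i)^2 ≤ (βs * Real.sqrt (w i))^2 := by
              apply sq_le_sq' _ hle
              nlinarith [hb i, mul_pos hβpos (hsq i)]
            calc (b i)^2 ≤ (βs * Real.sqrt (w i))^2 := this
              _ = βs^2 * w i := by
                rw [mul_pow, Real.sq_sqrt (hw i).le]
          nlinarith
        exact mul_le_mul_of_nonpos_right h2 h1
      · -- A i = βs √w ≤ b i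
        have hAe : A i = βs * Real.sqrt (w i) := he
        have : w i / (A i)^2 = c := by
          rw [hAe, hc, mul_pow, Real.sq_sqrt (hw i).le, mul_comm,
            div_mul_eq_div_div]
          rw [div_self (ne_of_gt (hw i))]
        rw [this]
    linarith
  have hsumA : ∑ i, A i = 1 := hβ
  calc ∑ i, (w i / A i + w i)
      = ∑ i, (w i / A i + w i) + c * ∑ i, (A i - a i) := by
        rw [Finset.sum_sub_distrib, hsumA, hasum, sub_self, mul_zero, add_zero]
    _ = ∑ i, (w i / A i + w i + c * (A i - a i)) := by
        rw [Finset.mul_sum, ← Finset.sum_add_distrib]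
    _ ≤ ∑ i, (w i / a i + w i) := Finset.sum_le_sum fun i _ => key i
end

section
/- Let $S_1,\dots,S_M$ be independent exponential random variables where $S_i$ has mean $\mathbb{E}[T]/r_i$ ($r_i > 0$, $\mathbb{E}[T] > 0$), and let $t_s \geq 0$. Then $\mathbb{P}(S_i \geq S_l - t_s \text{ for all } i \neq l) = 1 - e^{-r_l t_s/\mathbb{E}[T]} + e^{-r_l t_s/\mathbb{E}[T]} \frac{r_l}{\sum_{i=1}^M r_i}$. -/
open MeasureTheory ProbabilityTheory Real Set

lemma expMeasure_eq_withDensity (b : ℝ) :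
    expMeasure b = volume.withDensity (exponentialPDF b) := rfl

lemma expMeasure_Iic {b : ℝ} (hb : 0 < b) (x : ℝ) :
    expMeasure b (Iic x) = ENNReal.ofReal (if 0 ≤ x then 1 - rexp (-(b * x)) else 0) := by
  rw [expMeasure_eq_withDensity, withDensity_apply _ measurableSet_Iic,
    lintegral_exponentialPDF_eq_antiDeriv hb]

lemma expMeasure_Iio {b : ℝ} (hb : 0 < b) (x : ℝ) :
    expMeasure b (Iio x) = ENNReal.ofReal (if 0 ≤ x then 1 - rexp (-(b * x)) else 0) := by
  rw [expMeasure_eq_withDensity, withDensity_apply _ measurableSet_Iio,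
    setLIntegral_congr Iio_ae_eq_Iic, ← withDensity_apply _ measurableSet_Iic,
    ← expMeasure_eq_withDensity, expMeasure_Iic hb]

lemma expMeasure_Ici {b : ℝ} (hb : 0 < b) (x : ℝ) :
    expMeasure b (Ici x) = ENNReal.ofReal (rexp (-(b * max x 0))) := by
  have : IsProbabilityMeasure (expMeasure b) := isProbabilityMeasure_expMeasure hb
  rw [← compl_Iio, measure_compl measurableSet_Iio (measure_ne_top _ _), measure_univ,
    expMeasure_Iio hb]
  by_cases h : 0 ≤ x
  · rw [if_pos h, max_eq_left h, ← ENNReal.ofReal_one, ← ENNReal.ofReal_sub _ (sub_nonneg.mpr (Real.exp_le_one_iff.mpr (neg_nonpos.mpr (mul_nonneg hb.le h))))]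
    congr 1; ring
  · rw [if_neg h, max_eq_right (le_of_not_ge h), ENNReal.ofReal_zero, tsub_zero, mul_zero,
      neg_zero, Real.exp_zero, ENNReal.ofReal_one]

lemma my_integrable0 {k : ℝ} (hk : 0 < k) (a : ℝ) :
    IntegrableOn (fun s => rexp (-(k * s))) (Ioi a) := by
  have := exp_neg_integrableOn_Ioi a hk
  simpa [neg_mul] using this

lemma my_integrable {k : ℝ} (hk : 0 < k) (a co : ℝ) :
    IntegrableOn (fun s => co * rexp (-(k * s))) (Ioi a) := by
  exact (my_integrable0 hk a).const_mul _

lemma exp_tail_integral {k : ℝ} (hk : 0 < k) (a : ℝ) :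
    ∫ x in Ioi a, rexp (-(k * x)) = k⁻¹ * rexp (-(k * a)) := by
  have := integral_comp_mul_left_Ioi (fun y => rexp (-y)) a hk
  simp only [smul_eq_mul, integral_exp_neg_Ioi] at this
  exact this

lemma key_lintegral {b c ts : ℝ} (hb : 0 < b) (hc : 0 ≤ c) (hts : 0 ≤ ts) :
    ∫⁻ s, exponentialPDF b s * ENNReal.ofReal (rexp (-(c * max (s - ts) 0)))
      = ENNReal.ofReal (1 - rexp (-(b * ts)) + rexp (-(b * ts)) * (b / (b + c))) := by
  have hbc : 0 < b + c := by linarith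
  rw [← lintegral_add_compl _ (measurableSet_Iic (a := ts)), compl_Iic]
  have h1 : ∫⁻ s in Iic ts, exponentialPDF b s * ENNReal.ofReal (rexp (-(c * max (s - ts) 0)))
      = ENNReal.ofReal (1 - rexp (-(b * ts))) := by
    rw [setLIntegral_congr_fun_ae measurableSet_Iic
      (ae_of_all _ (fun s (hs : s ≤ ts) => by
        rw [max_eq_right (by linarith), mul_zero, neg_zero, Real.exp_zero,
          ENNReal.ofReal_one, mul_one])),
      lintegral_exponentialPDF_eq_antiDeriv hb, if_pos hts]
  have h2 : ∫⁻ s in Ioi ts, exponentialPDF b s * ENNReal.ofReal (rexp (-(c * max (s - ts) 0)))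
      = ENNReal.ofReal (rexp (-(b * ts)) * (b / (b + c))) := by
    have hcong : ∀ s ∈ Ioi ts,
        exponentialPDF b s * ENNReal.ofReal (rexp (-(c * max (s - ts) 0)))
          = ENNReal.ofReal ((b * rexp (c * ts)) * rexp (-((b + c) * s))) := by
      intro s hs
      have hs' : ts < s := hs
      rw [exponentialPDF_of_nonneg (by linarith), max_eq_left (by linarith),
        ← ENNReal.ofReal_mul (by positivity)]
      congr 1
      rw [mul_assoc, mul_assoc, ← Real.exp_add, ← Real.exp_add]
      ring_nf
    rw [setLIntegral_congr_fun_ae measurableSet_Ioi (ae_of_all _ hcong),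
      ← ofReal_integral_eq_lintegral_ofReal (my_integrable hbc ts _)
        (ae_of_all _ fun s => by positivity)]
    congr 1
    have hx : rexp (c * ts) * rexp (-((b + c) * ts)) = rexp (-(b * ts)) := by
      rw [← Real.exp_add]; congr 1; ring
    rw [integral_const_mul, exp_tail_integral hbc, div_eq_mul_inv, ← hx]
    ring
  rw [h1, h2, ← ENNReal.ofReal_add
    (sub_nonneg.mpr (Real.exp_le_one_iff.mpr (neg_nonpos.mpr (by positivity))))
    (by positivity)]

theorem transmission_probability (M : ℕ) (hM : 0 < M)
    {Ω : Type*} [MeasurableSpace Ω] (μ : Measure Ω) [IsProbabilityMeasure μ]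
    (r : Fin M → ℝ) (hr : ∀ i, 0 < r i) (ET : ℝ) (hET : 0 < ET)
    (ts : ℝ) (hts : 0 ≤ ts)
    (S : Fin M → Ω → ℝ) (hmeas : ∀ i, Measurable (S i))
    (hindep : iIndepFun S μ)
    (hdist : ∀ i, μ.map (S i) = expMeasure (r i / ET))
    (l : Fin M) :
    μ {ω | ∀ i, i ≠ l → S i ω ≥ S l ω - ts}
      = ENNReal.ofReal (1 - Real.exp (-(r l * ts / ET))
          + Real.exp (-(r l * ts / ET)) * (r l / ∑ i, r i)) := by
  obtain ⟨n, rfl⟩ : ∃ n, M = n + 1 := ⟨M - 1, (Nat.succ_pred_eq_of_pos hM).symm⟩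
  set ν : Fin (n + 1) → Measure ℝ := fun i => expMeasure (r i / ET) with hν
  have hri : ∀ i, 0 < r i / ET := fun i => div_pos (hr i) hET
  haveI : ∀ i, IsProbabilityMeasure (ν i) := fun i => isProbabilityMeasure_expMeasure (hri i)
  haveI : ∀ i, SigmaFinite (ν i) := fun i => inferInstance
  have hg : Measurable (fun ω (i : Fin (n + 1)) => S i ω) :=
    measurable_pi_lambda _ fun i => hmeas i
  set A : Set (Fin (n + 1) → ℝ) := {x | ∀ i, i ≠ l → x i ≥ x l - ts} with hA
  have hAmeas : MeasurableSet A := by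
    have hAeq : A = ⋂ i, {x : Fin (n + 1) → ℝ | i ≠ l → x i ≥ x l - ts} := by
      ext x; simp [hA]
    rw [hAeq]
    refine MeasurableSet.iInter fun i => ?_
    by_cases h : i = l
    · simp [h]
    · have : {x : Fin (n + 1) → ℝ | i ≠ l → x i ≥ x l - ts}
          = {x : Fin (n + 1) → ℝ | x l - ts ≤ x i} := by
        ext x; simp [h]
      rw [this]
      exact measurableSet_le ((measurable_pi_apply l).sub measurable_const)
        (measurable_pi_apply i)
  have hmap : μ.map (fun ω i => S i ω) = Measure.pi ν := by
    refine (Measure.pi_eq (μ := ν) fun s hs => ?_).symm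
    rw [Measure.map_apply hg (MeasurableSet.univ_pi hs)]
    have hpre : (fun ω i => S i ω) ⁻¹' (Set.pi univ s) = ⋂ i ∈ Finset.univ, S i ⁻¹' s i := by
      ext ω; simp [Set.mem_pi]
    rw [hpre, hindep.measure_inter_preimage_eq_mul Finset.univ (fun i _ => hs i)]
    exact Finset.prod_congr rfl fun i _ => by
      rw [← Measure.map_apply (hmeas i) (hs i), hdist i]
  have hevent : {ω | ∀ i, i ≠ l → S i ω ≥ S l ω - ts} = (fun ω (i : Fin (n+1)) => S i ω) ⁻¹' A :=
    rfl
  rw [hevent, ← Measure.map_apply hg hAmeas, hmap]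
  set e := MeasurableEquiv.piFinSuccAbove (fun _ : Fin (n + 1) => ℝ) l with he
  have mp := measurePreserving_piFinSuccAbove ν l
  set B : Set (ℝ × (Fin n → ℝ)) := {p | ∀ j, p.2 j ≥ p.1 - ts} with hB
  have hBmeas : MeasurableSet B := by
    have hBeq : B = ⋂ j, {p : ℝ × (Fin n → ℝ) | p.1 - ts ≤ p.2 j} := by
      ext p; simp [hB]
    rw [hBeq]
    exact MeasurableSet.iInter fun j => measurableSet_le
      (measurable_fst.sub measurable_const) ((measurable_pi_apply j).comp measurable_snd)
  have hpreB : e ⁻¹' B = A := by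
    ext x
    simp only [hA, hB, mem_preimage, mem_setOf_eq, he,
      MeasurableEquiv.piFinSuccAbove, MeasurableEquiv.coe_mk, Fin.insertNthEquiv,
      Equiv.coe_fn_symm_mk]
    constructor
    · intro h i hi
      obtain ⟨j, rfl⟩ := Fin.exists_succAbove_eq hi
      exact h j
    · intro h j
      exact h _ (Fin.succAbove_ne l j)
  have hpiA : Measure.pi ν A = ((ν l).prod (Measure.pi fun j => ν (l.succAbove j))) B := by
    rw [← mp.map_eq, Measure.map_apply e.measurable hBmeas, hpreB]
  rw [hpiA, Measure.prod_apply hBmeas]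
  set c : ℝ := (∑ j : Fin n, r (l.succAbove j)) / ET with hc
  have hc0 : 0 ≤ c := by
    apply div_nonneg _ hET.le
    exact Finset.sum_nonneg fun j _ => (hr _).le
  have hsec : ∀ s : ℝ, (Measure.pi fun j => ν (l.succAbove j)) (Prod.mk s ⁻¹' B)
      = ENNReal.ofReal (rexp (-(c * max (s - ts) 0))) := by
    intro s
    have : Prod.mk s ⁻¹' B = Set.pi univ (fun _ : Fin n => Ici (s - ts)) := by
      ext y; simp [hB, Set.mem_pi, ge_iff_le, Pi.le_def, sub_le_iff_le_add]
    rw [this, Measure.pi_pi]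
    have : ∀ j : Fin n, ν (l.succAbove j) (Ici (s - ts))
        = ENNReal.ofReal (rexp (-(r (l.succAbove j) / ET * max (s - ts) 0))) := fun j =>
      expMeasure_Ici (hri _) _
    simp_rw [this]
    rw [← ENNReal.ofReal_prod_of_nonneg (fun j _ => (Real.exp_pos _).le), ← Real.exp_sum]
    congr 2
    simp only [← neg_mul]
    rw [← Finset.sum_mul, Finset.sum_neg_distrib, hc, Finset.sum_div]
  simp_rw [hsec]
  have hint_meas : Measurable fun s : ℝ => ENNReal.ofReal (rexp (-(c * max (s - ts) 0))) := by
    have : Continuous fun s : ℝ => rexp (-(c * max (s - ts) 0)) := by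
      apply Real.continuous_exp.comp
      exact ((continuous_const.mul ((continuous_id.sub continuous_const).max
        continuous_const))).neg
    exact (ENNReal.continuous_ofReal.comp this).measurable
  have hpdf_meas : Measurable (exponentialPDF (r l / ET)) :=
    ENNReal.measurable_ofReal.comp (measurable_exponentialPDFReal _)
  rw [show ν l = volume.withDensity (exponentialPDF (r l / ET)) from rfl,
    lintegral_withDensity_eq_lintegral_mul _ hpdf_meas hint_meas]
  rw [show (fun a => (exponentialPDF (r l / ET) * fun s => ENNReal.ofReal
      (rexp (-(c * max (s - ts) 0)))) a)
    = fun s => exponentialPDF (r l / ET) s * ENNReal.ofReal (rexp (-(c * max (s - ts) 0)))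
    from rfl]
  rw [key_lintegral (hri l) hc0 hts]
  have hsum : (0:ℝ) < ∑ i, r i := Finset.sum_pos (fun i _ => hr i) Finset.univ_nonempty
  have h1 : r l / ET * ts = r l * ts / ET := by ring
  have h2 : r l / ET + c = (∑ i, r i) / ET := by
    rw [hc, ← add_div]
    congr 1
    exact (Fin.sum_univ_succAbove (fun i => r i) l).symm
  have h3 : (r l / ET) / ((∑ i, r i) / ET) = r l / ∑ i, r i := by
    rw [div_div_div_cancel_right₀]
    exact hET.ne'
  rw [h1, h2, h3]
end
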